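/- The one-sided derivatives of M_⋆ agree at each junction point κ_n: lim_{x↑κ_n} M_⋆'(x) = lim_{x↓κ_n} M_⋆'(x) = (π/2)/(1 − 2κ_n), so M_⋆ is continuously differentiable on (0, 1/2). -/

import Mathlib

open Real

noncomputable def qq : ℝ := (π ^ 2 - 4) / (π ^ 2 + 4)
noncomputable def kk (n : ℕ) : ℝ := (1 - qq ^ n) / 2
noncomputable def AA : ℝ := Real.arcsin (4 * π / (π ^ 2 + 4))
noncomputable def ff (n : ℕ) (x : ℝ) : ℝ :=
  (n : ℝ) / 2 * AA + 1 / 2 * Real.arcsin (π * (x - kk n) / qq ^ n)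
noncomputable def dd (n : ℕ) (x : ℝ) : ℝ :=
  1 / 2 * (1 / Real.sqrt (1 - (π * (x - kk n) / qq ^ n) ^ 2)) * (π / qq ^ n)

lemma pi_sq_gt : (4 : ℝ) < π ^ 2 := by nlinarith [Real.pi_gt_three]

lemma hq0 : 0 < qq := div_pos (by nlinarith [pi_sq_gt]) (by positivity)

lemma hq1 : qq < 1 := by
  rw [qq, div_lt_one (by positivity)]; linarith

lemma hqn (n : ℕ) : 0 < qq ^ n := pow_pos hq0 n

lemma qpow_succ_lt (n : ℕ) : qq ^ (n + 1) < qq ^ n := by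
  rw [pow_succ]
  nlinarith [hqn n, hq1, hq0]

lemma kk_lt (n : ℕ) : kk n < kk (n + 1) := by
  have := qpow_succ_lt n
  rw [kk, kk]; linarith

lemma kk_nonneg (n : ℕ) : 0 ≤ kk n := by
  have : qq ^ n ≤ 1 := pow_le_one₀ hq0.le hq1.le
  rw [kk]; linarith

lemma kk_lt_half (n : ℕ) : kk n < 1 / 2 := by
  have := hqn n
  rw [kk]; linarith

lemma one_sub_two_kk (n : ℕ) : 1 - 2 * kk n = qq ^ n := by rw [kk]; ring

lemma hsA0 : 0 < 4 * π / (π ^ 2 + 4) := by positivity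

lemma hsA1 : 4 * π / (π ^ 2 + 4) < 1 := by
  rw [div_lt_one (by positivity)]
  nlinarith [Real.pi_gt_three]

lemma one_sub_sA_sq : 1 - (4 * π / (π ^ 2 + 4)) ^ 2 = qq ^ 2 := by
  rw [qq]
  have h : (π : ℝ) ^ 2 + 4 ≠ 0 := by positivity
  field_simp
  ring

lemma sqrt_one_sub_sA_sq : Real.sqrt (1 - (4 * π / (π ^ 2 + 4)) ^ 2) = qq := by
  rw [one_sub_sA_sq, Real.sqrt_sq hq0.le]

lemma kk_diff (n : ℕ) : kk (n + 1) - kk n = qq ^ n * (1 - qq) / 2 := by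
  rw [kk, kk, pow_succ]; ring

lemma harg (n : ℕ) : π * (kk (n + 1) - kk n) / qq ^ n = 4 * π / (π ^ 2 + 4) := by
  rw [kk_diff]
  have h1 : (1 : ℝ) - qq = 8 / (π ^ 2 + 4) := by
    rw [qq]
    have h : (π : ℝ) ^ 2 + 4 ≠ 0 := by positivity
    field_simp
    ring
  rw [h1]
  have h2 : (qq : ℝ) ^ n ≠ 0 := (hqn n).ne'
  have h : (π : ℝ) ^ 2 + 4 ≠ 0 := by positivity
  field_simp
  ring

lemma ff_junction (n : ℕ) : ff n (kk (n + 1)) = ff (n + 1) (kk (n + 1)) := by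
  unfold ff
  rw [harg n]
  have : π * (kk (n + 1) - kk (n + 1)) / qq ^ (n + 1) = 0 := by ring
  rw [this, Real.arcsin_zero, AA]
  push_cast
  ring

lemma arg_sq_lt (n : ℕ) {x : ℝ} (h1 : kk n ≤ x) (h2 : x ≤ kk (n + 1)) :
    (π * (x - kk n) / qq ^ n) ^ 2 < 1 := by
  have hu0 : 0 ≤ π * (x - kk n) / qq ^ n :=
    div_nonneg (mul_nonneg Real.pi_pos.le (by linarith)) (hqn n).le
  have hu2 : π * (x - kk n) / qq ^ n ≤ 4 * π / (π ^ 2 + 4) := by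
    rw [← harg n]
    have hqq := hqn n
    have hpp := Real.pi_pos
    gcongr
  nlinarith [hsA0, hsA1]

lemma hasDerivAt_ff (n : ℕ) (x : ℝ) (h : (π * (x - kk n) / qq ^ n) ^ 2 < 1) :
    HasDerivAt (ff n) (dd n x) x := by
  have habs : |π * (x - kk n) / qq ^ n| < 1 := by
    rw [← Real.sqrt_one, ← Real.sqrt_sq_eq_abs]
    exact Real.sqrt_lt_sqrt (sq_nonneg _) (by linarith)
  have h1 : π * (x - kk n) / qq ^ n ≠ -1 := by
    intro hh; rw [hh] at habs; norm_num at habs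
  have h2 : π * (x - kk n) / qq ^ n ≠ 1 := by
    intro hh; rw [hh] at habs; norm_num at habs
  have hu : HasDerivAt (fun y : ℝ => π * (y - kk n) / qq ^ n) (π / qq ^ n) x := by
    have := (((hasDerivAt_id x).sub_const (kk n)).const_mul π).div_const (qq ^ n)
    simpa using this
  have harc := (Real.hasDerivAt_arcsin h1 h2).comp x hu
  have := (harc.const_mul (1 / 2 : ℝ)).const_add ((n : ℝ) / 2 * AA)
  refine this.congr_deriv ?_
  rw [dd]; ring

lemma dd_self (n : ℕ) : dd n (kk n) = π / 2 / qq ^ n := by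
  have : π * (kk n - kk n) / qq ^ n = 0 := by ring
  rw [dd, this]
  norm_num
  ring

lemma dd_junction (n : ℕ) : dd n (kk (n + 1)) = π / 2 / qq ^ (n + 1) := by
  rw [dd, harg n, sqrt_one_sub_sA_sq, pow_succ]
  have h2 : (qq : ℝ) ^ n ≠ 0 := (hqn n).ne'
  field_simp

lemma dd_contAt (n : ℕ) (x : ℝ) (h : (π * (x - kk n) / qq ^ n) ^ 2 < 1) :
    ContinuousAt (dd n) x := by
  have hs : Real.sqrt (1 - (π * (x - kk n) / qq ^ n) ^ 2) ≠ 0 :=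
    (Real.sqrt_pos.mpr (by linarith)).ne'
  have hc : ContinuousAt (fun y => Real.sqrt (1 - (π * (y - kk n) / qq ^ n) ^ 2)) x :=
    (Real.continuous_sqrt.comp (by continuity)).continuousAt
  unfold dd
  exact (continuousAt_const.mul (continuousAt_const.div hc hs)).mul continuousAt_const

/-- For any function `M` satisfying the piecewise definition of `M_⋆`, the one-sided
derivatives agree at each junction point `κ n` (`n ≥ 1`), both being equal to
`(π/2)/(1 − 2 κ n)`; consequently `M` is continuously differentiable on `(0, 1/2)`. -/
theorem Mstar_onesided_derivs_agree (M : ℝ → ℝ)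
    (hM : ∀ n : ℕ, ∀ x ∈ Set.Ico ((1 - ((π ^ 2 - 4) / (π ^ 2 + 4)) ^ n) / 2)
        ((1 - ((π ^ 2 - 4) / (π ^ 2 + 4)) ^ (n + 1)) / 2),
      M x = (n : ℝ) / 2 * Real.arcsin (4 * π / (π ^ 2 + 4))
          + 1 / 2 * Real.arcsin (π * (x - (1 - ((π ^ 2 - 4) / (π ^ 2 + 4)) ^ n) / 2)
              / (1 - 2 * ((1 - ((π ^ 2 - 4) / (π ^ 2 + 4)) ^ n) / 2)))) :
    (∀ n : ℕ, 1 ≤ n →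
        HasDerivWithinAt M
          ((π / 2) / (1 - 2 * ((1 - ((π ^ 2 - 4) / (π ^ 2 + 4)) ^ n) / 2)))
          (Set.Iio ((1 - ((π ^ 2 - 4) / (π ^ 2 + 4)) ^ n) / 2))
          ((1 - ((π ^ 2 - 4) / (π ^ 2 + 4)) ^ n) / 2) ∧
        HasDerivWithinAt M
          ((π / 2) / (1 - 2 * ((1 - ((π ^ 2 - 4) / (π ^ 2 + 4)) ^ n) / 2)))
          (Set.Ioi ((1 - ((π ^ 2 - 4) / (π ^ 2 + 4)) ^ n) / 2))
          ((1 - ((π ^ 2 - 4) / (π ^ 2 + 4)) ^ n) / 2)) ∧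
      ContDiffOn ℝ 1 M (Set.Ioo (0 : ℝ) (1 / 2)) := by
  -- M equals ff n on Ico (kk n) (kk (n+1))
  have hMf : ∀ n : ℕ, ∀ x ∈ Set.Ico (kk n) (kk (n + 1)), M x = ff n x := by
    intro n x hx
    have h := hM n x hx
    rw [h, ff, AA]
    have he : (1 : ℝ) - 2 * ((1 - qq ^ n) / 2) = qq ^ n := by ring
    rw [show ((1 : ℝ) - ((π ^ 2 - 4) / (π ^ 2 + 4)) ^ n) / 2 = kk n from rfl] at *
    rw [show ((1 : ℝ) - 2 * kk n) = qq ^ n from one_sub_two_kk n]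
  have hMIcc : ∀ n : ℕ, ∀ x ∈ Set.Icc (kk n) (kk (n + 1)), M x = ff n x := by
    intro n x hx
    rcases lt_or_eq_of_le hx.2 with h | h
    · exact hMf n x ⟨hx.1, h⟩
    · subst h
      rw [hMf (n + 1) _ ⟨le_refl _, kk_lt (n + 1)⟩, ff_junction]
  -- one-sided derivatives at junctions
  have hR : ∀ n : ℕ, HasDerivWithinAt M (π / 2 / qq ^ n) (Set.Ioi (kk n)) (kk n) := by
    intro n
    have h0 : (π * (kk n - kk n) / qq ^ n) ^ 2 < 1 := by
      rw [show π * (kk n - kk n) / qq ^ n = 0 by ring]; norm_num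
    have hd := hasDerivAt_ff n (kk n) h0
    rw [dd_self] at hd
    have h1 : HasDerivWithinAt M (π / 2 / qq ^ n) (Set.Icc (kk n) (kk (n + 1))) (kk n) :=
      (hd.hasDerivWithinAt).congr (fun y hy => hMIcc n y hy)
        (hMIcc n _ ⟨le_refl _, (kk_lt n).le⟩)
    apply h1.mono_of_mem_nhdsWithin
    apply Filter.mem_of_superset
      (Filter.inter_mem self_mem_nhdsWithin
        (nhdsWithin_le_nhds (Iio_mem_nhds (kk_lt n))))
    rintro y ⟨hy1, hy2⟩
    exact ⟨le_of_lt hy1, le_of_lt hy2⟩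
  have hL : ∀ m : ℕ,
      HasDerivWithinAt M (π / 2 / qq ^ (m + 1)) (Set.Iio (kk (m + 1))) (kk (m + 1)) := by
    intro m
    have hsq : (π * (kk (m + 1) - kk m) / qq ^ m) ^ 2 < 1 :=
      arg_sq_lt m (kk_lt m).le (le_refl _)
    have hd := hasDerivAt_ff m (kk (m + 1)) hsq
    rw [dd_junction] at hd
    have h1 : HasDerivWithinAt M (π / 2 / qq ^ (m + 1))
        (Set.Icc (kk m) (kk (m + 1))) (kk (m + 1)) :=
      (hd.hasDerivWithinAt).congr (fun y hy => hMIcc m y hy)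
        (hMIcc m _ ⟨(kk_lt m).le, le_refl _⟩)
    apply h1.mono_of_mem_nhdsWithin
    apply Filter.mem_of_superset
      (Filter.inter_mem self_mem_nhdsWithin
        (nhdsWithin_le_nhds (Ioi_mem_nhds (kk_lt m))))
    rintro y ⟨hy1, hy2⟩
    exact ⟨le_of_lt hy2, le_of_lt hy1⟩
  -- full derivative at junctions
  have hAt : ∀ m : ℕ, HasDerivAt M (π / 2 / qq ^ (m + 1)) (kk (m + 1)) := by
    intro m
    have h1 := (hL m).union (hasDerivWithinAt_Ioi_iff_Ici.mp (hR (m + 1)))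
    rw [Set.Iio_union_Ici] at h1
    exact hasDerivWithinAt_univ.mp h1
  -- derivative at interior points of pieces
  have hInt : ∀ n : ℕ, ∀ x : ℝ, kk n < x → x < kk (n + 1) → HasDerivAt M (dd n x) x := by
    intro n x h1 h2
    have hsq := arg_sq_lt n h1.le h2.le
    apply (hasDerivAt_ff n x hsq).congr_of_eventuallyEq
    filter_upwards [isOpen_Ioo.mem_nhds (Set.mem_Ioo.mpr ⟨h1, h2⟩)] with y hy
    exact hMIcc n y ⟨hy.1.le, hy.2.le⟩
  -- every point of [0, 1/2) lies in some piece
  have hex : ∀ x : ℝ, 0 ≤ x → x < 1 / 2 → ∃ n : ℕ, kk n ≤ x ∧ x < kk (n + 1) := by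
    intro x hx0 hx1
    have hpos : 0 < 1 - 2 * x := by linarith
    obtain ⟨N, hN⟩ := exists_pow_lt_of_lt_one hpos hq1
    have hexn : ∃ n : ℕ, qq ^ (n + 1) < 1 - 2 * x := by
      exact ⟨N, lt_of_le_of_lt (pow_le_pow_of_le_one hq0.le hq1.le (Nat.le_succ N)) hN⟩
    refine ⟨Nat.find hexn, ?_, ?_⟩
    · rcases Nat.eq_zero_or_pos (Nat.find hexn) with h | h
      · rw [h, kk]; norm_num; linarith
      · have hlt : Nat.find hexn - 1 < Nat.find hexn := by omega
        have h2 := Nat.find_min hexn hlt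
        push_neg at h2
        have h3 : Nat.find hexn - 1 + 1 = Nat.find hexn := by omega
        rw [h3] at h2
        rw [kk]; linarith
    · have := Nat.find_spec hexn
      rw [kk]
      linarith
  -- full derivative everywhere on pieces (for x > 0)
  have hDeriv : ∀ n : ℕ, ∀ x : ℝ, 0 < x → kk n ≤ x → x < kk (n + 1) →
      HasDerivAt M (dd n x) x := by
    intro n x hx0 h1 h2
    rcases lt_or_eq_of_le h1 with h | h
    · exact hInt n x h h2
    · have hn : n ≠ 0 := by
        intro h0
        rw [h0, kk] at h
        simp at h
        linarith
      obtain ⟨m, hm⟩ := Nat.exists_eq_succ_of_ne_zero hn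
      subst hm
      rw [← h, dd_self]
      rw [← h] at *
      exact hAt m
  constructor
  · intro n hn
    obtain ⟨m, hm⟩ := Nat.exists_eq_succ_of_ne_zero (by omega : n ≠ 0)
    subst hm
    constructor
    · show HasDerivWithinAt M ((π / 2) / (1 - 2 * kk (m + 1))) (Set.Iio (kk (m + 1))) (kk (m + 1))
      rw [one_sub_two_kk]
      exact hL m
    · show HasDerivWithinAt M ((π / 2) / (1 - 2 * kk (m + 1))) (Set.Ioi (kk (m + 1))) (kk (m + 1))
      rw [one_sub_two_kk]
      exact hR (m + 1)
  · rw [show (1 : WithTop ℕ∞) = 0 + 1 from rfl,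
      contDiffOn_succ_iff_deriv_of_isOpen isOpen_Ioo]
    refine ⟨?_, by simp, ?_⟩
    · intro x hx
      obtain ⟨n, h1, h2⟩ := hex x hx.1.le hx.2
      exact (hDeriv n x hx.1 h1 h2).differentiableAt.differentiableWithinAt
    · rw [contDiffOn_zero]
      intro x hx
      apply ContinuousAt.continuousWithinAt
      obtain ⟨n, h1, h2⟩ := hex x hx.1.le hx.2
      rcases lt_or_eq_of_le h1 with h | h
      · -- interior of a piece
        have hev : (fun y => dd n y) =ᶠ[nhds x] deriv M := by
          filter_upwards [isOpen_Ioo.mem_nhds (Set.mem_Ioo.mpr ⟨h, h2⟩)] with y hy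
          exact ((hInt n y hy.1 hy.2).deriv).symm
        exact (dd_contAt n x (arg_sq_lt n h.le h2.le)).congr hev
      · -- junction point
        have hn : n ≠ 0 := by
          intro h0
          rw [h0, kk] at h
          simp at h
          linarith [hx.1]
        obtain ⟨m, hm⟩ := Nat.exists_eq_succ_of_ne_zero hn
        subst hm
        have hxkk : x = kk (m + 1) := h.symm
        subst hxkk
        set c := kk (m + 1) with hc
        set D : ℝ → ℝ := fun y => if y < c then dd m y else dd (m + 1) y with hD
        have hDc : D c = π / 2 / qq ^ (m + 1) := by
          rw [hD]
          simp only [lt_irrefl, if_false]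
          exact dd_self (m + 1)
        have hdmc : dd m c = π / 2 / qq ^ (m + 1) := dd_junction m
        have hsqm : (π * (c - kk m) / qq ^ m) ^ 2 < 1 :=
          arg_sq_lt m (kk_lt m).le (le_refl _)
        have hsqn : (π * (c - kk (m + 1)) / qq ^ (m + 1)) ^ 2 < 1 := by
          rw [show π * (c - kk (m + 1)) / qq ^ (m + 1) = 0 by rw [hc]; ring]
          norm_num
        -- continuity of D at c
        have hcontD : ContinuousAt D c := by
          rw [ContinuousAt, ← nhdsLE_sup_nhdsGE c, Filter.tendsto_sup]
          constructor
          · have t1 : Filter.Tendsto (dd m) (nhdsWithin c (Set.Iic c)) (nhds (D c)) := by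
              rw [hDc, ← hdmc]
              exact ((dd_contAt m c hsqm).tendsto).mono_left nhdsWithin_le_nhds
            apply t1.congr'
            filter_upwards [self_mem_nhdsWithin] with y (hy : y ≤ c)
            rcases lt_or_eq_of_le hy with h' | h'
            · rw [hD]; simp [h']
            · subst h'
              rw [hDc, hdmc]
          · have t1 : Filter.Tendsto (dd (m + 1)) (nhdsWithin c (Set.Ici c)) (nhds (D c)) := by
              rw [hDc, ← dd_self (m + 1)]
              exact ((dd_contAt (m + 1) c hsqn).tendsto).mono_left nhdsWithin_le_nhds
            apply t1.congr'
            filter_upwards [self_mem_nhdsWithin] with y (hy : c ≤ y)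
            rw [hD]
            simp [not_lt.mpr hy]
        -- deriv M equals D near c
        have hev : D =ᶠ[nhds c] deriv M := by
          have hmem : Set.Ioo (kk m) (kk (m + 2)) ∈ nhds c :=
            isOpen_Ioo.mem_nhds (Set.mem_Ioo.mpr ⟨kk_lt m, kk_lt (m + 1)⟩)
          filter_upwards [hmem] with y hy
          rcases lt_trichotomy y c with h' | h' | h'
          · rw [hD]
            simp only [h', if_true]
            exact ((hInt m y hy.1 h').deriv).symm
          · subst h'
            rw [hDc, ((hAt m).deriv).symm]
          · rw [hD]
            simp only [not_lt.mpr h'.le, if_false]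
            exact ((hInt (m + 1) y h' hy.2).deriv).symm
        exact hcontD.congr hev
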